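/- Let i ∈ {0,1} and let G = (V, lab, args, r, Sc) be a λ-ho-term-graph over the signature Σλ^i. Then for every vertex w ∈ V and every abstraction vertex v with w ∈ Sc(v): v is visited on every access path of w, and all vertices occurring on an access path of w strictly after v belong to Sc(v)\{v}. Consequently, since every vertex has an access path, the set of binders of w (the set of abstraction vertices v with w ∈ Sc(v)) is finite. -/

import Mathlib

/-! Common framework: term graphs over a signature, homomorphisms, bisimulations,
    access paths, λ-ho-term-graphs, λ-ap-ho-term-graphs, λ-term-graphs with
    scope delimiters, and the translation constructions. -/

inductive Lab3 : Type
  | app | lam | var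
  deriving DecidableEq

/-- Arity function of the signature Σλ^i = {@, λ, 0} with ar(@)=2, ar(λ)=1, ar(0)=i. -/
def ar3 (i : ℕ) : Lab3 → ℕ
  | .app => 2
  | .lam => 1
  | .var => i

inductive Lab4 : Type
  | app | lam | var | del
  deriving DecidableEq

/-- Arity function of Σλ^{i,j} = {@, λ, 0, S} with ar(@)=2, ar(λ)=1, ar(0)=i, ar(S)=j. -/
def ar4 (i j : ℕ) : Lab4 → ℕ
  | .app => 2
  | .lam => 1
  | .var => i
  | .del => j

def lab3to4 : Lab3 → Lab4
  | .app => .app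
  | .lam => .lam
  | .var => .var

def lab4to3 : Lab4 → Lab3
  | .app => .app
  | .lam => .lam
  | .var => .var
  | .del => .var

/-- A term graph over a signature: vertex labelling, argument (successor) lists of
    length matching the arity of the label, a root, and every vertex reachable
    from the root. -/
structure TermGraph (L : Type) (ar : L → ℕ) (V : Type) where
  lab : V → L
  args : V → List V
  root : V
  args_len : ∀ v, (args v).length = ar (lab v)
  reach : ∀ v, Relation.ReflTransGen (fun a b => b ∈ args a) root v

namespace TermGraph

variable {L V : Type} {ar : L → ℕ}

/-- `G.Succ k w w'` : `w'` is the `k`-th successor of `w` (the edge w ↣_k w'). -/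
def Succ (G : TermGraph L ar V) (k : ℕ) (w w' : V) : Prop :=
  (G.args w)[k]? = some w'

/-- `G.Edge w w'` : `w'` is some successor of `w` (the relation ↣). -/
def Edge (G : TermGraph L ar V) (w w' : V) : Prop :=
  w' ∈ G.args w

/-- Reachability ↠ along edges. -/
def Reaches (G : TermGraph L ar V) (w w' : V) : Prop :=
  Relation.ReflTransGen G.Edge w w'

end TermGraph

/-- Homomorphism (functional bisimulation) of term graphs. -/
def IsHom {L V₁ V₂ : Type} {ar : L → ℕ} (h : V₁ → V₂)
    (G₁ : TermGraph L ar V₁) (G₂ : TermGraph L ar V₂) : Prop :=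
  (∀ v, G₂.lab (h v) = G₁.lab v) ∧
  (∀ v, G₂.args (h v) = (G₁.args v).map h) ∧
  h G₁.root = G₂.root

/-- Bisimulation between term graphs: a term graph on a set of pairs, rooted at the
    pair of roots, whose two projections are homomorphisms. -/
def Bisim {L V₁ V₂ : Type} {ar : L → ℕ}
    (G₁ : TermGraph L ar V₁) (G₂ : TermGraph L ar V₂) : Prop :=
  ∃ (S : Set (V₁ × V₂)) (R : TermGraph L ar S),
    (R.root : V₁ × V₂) = (G₁.root, G₂.root) ∧
    IsHom (fun x : S => x.val.1) R G₁ ∧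
    IsHom (fun x : S => x.val.2) R G₂

/-- An access path of a vertex `w`: a path from the root to `w` (with edge indices)
    that visits no vertex twice. -/
structure AccessPath {L V : Type} {ar : L → ℕ} (G : TermGraph L ar V) (w : V) where
  n : ℕ
  vs : Fin (n + 1) → V
  ks : Fin n → ℕ
  start : vs 0 = G.root
  finish : vs (Fin.last n) = w
  step : ∀ m : Fin n, G.Succ (ks m) (vs m.castSucc) (vs m.succ)
  inj : Function.Injective vs

/-- The conditions (root), (self), (nest), (closed), (scope)₀ and (for i = 1) (scope)₁
    on a scope function. -/
def ScopeConds (i : ℕ) {V : Type} (G : TermGraph Lab3 (ar3 i) V)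
    (Sc : V → Set V) : Prop :=
  (∀ v, G.lab v = .lam → G.root ∉ Sc v \ {v}) ∧
  (∀ v, G.lab v = .lam → v ∈ Sc v) ∧
  (∀ v₀ v₁, G.lab v₀ = .lam → G.lab v₁ = .lam → v₁ ∈ Sc v₀ \ {v₀} →
      Sc v₁ ⊆ Sc v₀ \ {v₀}) ∧
  (∀ v w wk k, G.lab v = .lam → G.Succ k w wk → wk ∈ Sc v \ {v} → w ∈ Sc v) ∧
  (∀ w, G.lab w = .var → ∃ v, G.lab v = .lam ∧ w ∈ Sc v \ {v}) ∧
  (i = 1 → ∀ w w₀, G.lab w = .var → G.Succ 0 w w₀ →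
      G.lab w₀ = .lam ∧ ∀ v, G.lab v = .lam → (w ∈ Sc v ↔ w₀ ∈ Sc v))

/-- λ-ho-term-graph over Σλ^i: a Σλ^i-term-graph endowed with a scope function. -/
structure LamHoTG (i : ℕ) (V : Type) extends TermGraph Lab3 (ar3 i) V where
  Sc : V → Set V
  conds : ScopeConds i toTermGraph Sc

/-- Correctness of an abstraction-prefix function for a Σλ^i-term-graph:
    (root), (λ), (@), (0)₀, and (for i = 1) (0)₁. -/
def CorrectAP (i : ℕ) {V : Type} (G : TermGraph Lab3 (ar3 i) V)
    (P : V → List V) : Prop :=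
  (P G.root = []) ∧
  (∀ w w₀, G.lab w = .lam → G.Succ 0 w w₀ → P w₀ <+: P w ++ [w]) ∧
  (∀ w wk k, G.lab w = .app → G.Succ k w wk → P wk <+: P w) ∧
  (∀ w, G.lab w = .var → P w ≠ []) ∧
  (i = 1 → ∀ w w₀, G.lab w = .var → G.Succ 0 w w₀ →
      G.lab w₀ = .lam ∧ P w₀ ++ [w₀] = P w)

/-- λ-ap-ho-term-graph over Σλ^i: a Σλ^i-term-graph endowed with a correct
    abstraction-prefix function. -/
structure LamApHoTG (i : ℕ) (V : Type) extends TermGraph Lab3 (ar3 i) V where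
  P : V → List V
  correct : CorrectAP i toTermGraph P

/-- `ScToP G Sc P` : the abstraction-prefix function `P` is the one obtained from the
    scope function `Sc` by the mapping A_i: for each vertex `w`, `P w` lists exactly
    the binders of `w` other than `w` itself, in order of strictly decreasing scopes. -/
def ScToP {i : ℕ} {V : Type} (G : TermGraph Lab3 (ar3 i) V)
    (Sc : V → Set V) (P : V → List V) : Prop :=
  ∀ w, (∀ v, v ∈ P w ↔ (G.lab v = .lam ∧ w ∈ Sc v ∧ v ≠ w)) ∧
    (P w).Chain' (fun a b => Sc b ⊂ Sc a)

/-- The scope function obtained from an abstraction-prefix function by the mapping B_i: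
    Sc(v) = { w | v occurs in P(w) } ∪ {v}. -/
def ScOfP {V : Type} (P : V → List V) : V → Set V :=
  fun v => {w | v ∈ P w} ∪ {v}

/-- Homomorphism of λ-ho-term-graphs (given by their underlying term graphs and
    scope functions). -/
def IsHoHom {i : ℕ} {V₁ V₂ : Type} (h : V₁ → V₂)
    (G₁ : TermGraph Lab3 (ar3 i) V₁) (Sc₁ : V₁ → Set V₁)
    (G₂ : TermGraph Lab3 (ar3 i) V₂) (Sc₂ : V₂ → Set V₂) : Prop :=
  IsHom h G₁ G₂ ∧ ∀ v, G₁.lab v = .lam → h '' Sc₁ v = Sc₂ (h v)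

/-- Homomorphism of λ-ap-ho-term-graphs (given by their underlying term graphs and
    abstraction-prefix functions). -/
def IsApHom {i : ℕ} {V₁ V₂ : Type} (h : V₁ → V₂)
    (G₁ : TermGraph Lab3 (ar3 i) V₁) (P₁ : V₁ → List V₁)
    (G₂ : TermGraph Lab3 (ar3 i) V₂) (P₂ : V₂ → List V₂) : Prop :=
  IsHom h G₁ G₂ ∧ ∀ v, (P₁ v).map h = P₂ (h v)

/-- Correctness of an abstraction-prefix function for a Σλ^{i,j}-term-graph:
    (root), (λ), (@), (0)₀, (0)₁ (for i = 1), (S)₁, and (S)₂ (for j = 2). -/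
def CorrectAP4 (i j : ℕ) {V : Type} (G : TermGraph Lab4 (ar4 i j) V)
    (P : V → List V) : Prop :=
  (P G.root = []) ∧
  (∀ w w₀, G.lab w = .lam → G.Succ 0 w w₀ → P w₀ = P w ++ [w]) ∧
  (∀ w wk k, G.lab w = .app → G.Succ k w wk → P wk = P w) ∧
  (∀ w, G.lab w = .var → P w ≠ []) ∧
  (i = 1 → ∀ w w₀, G.lab w = .var → G.Succ 0 w w₀ →
      G.lab w₀ = .lam ∧ P w₀ ++ [w₀] = P w) ∧
  (∀ w w₀, G.lab w = .del → G.Succ 0 w w₀ → ∃ v, P w₀ ++ [v] = P w) ∧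
  (j = 2 → ∀ w w₁, G.lab w = .del → G.Succ 1 w w₁ →
      G.lab w₁ = .lam ∧ P w₁ ++ [w₁] = P w)

/-- Vertex-set predicate of the construction G_i^j: original vertices (inl) together
    with scope-delimiter vertices (w, k, w', p) inserted along an edge w ↣_k w',
    one for each prefix p with P(w') < p ≤ P(w)·w (for λ-vertices w),
    resp. P(w') < p ≤ P(w) (for @-vertices w). -/
def GVP {i : ℕ} {V : Type} (G : TermGraph Lab3 (ar3 i) V) (P : V → List V) :
    V ⊕ (V × ℕ × V × List V) → Prop
  | .inl _ => True
  | .inr (w, k, w', p) =>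
      G.Succ k w w' ∧ P w' <+: p ∧ P w' ≠ p ∧
      ((G.lab w = .lam ∧ p <+: P w ++ [w]) ∨ (G.lab w = .app ∧ p <+: P w))

/-- Vertex set of the image of G_i^j. -/
def GVert {i : ℕ} {V : Type} (G : TermGraph Lab3 (ar3 i) V) (P : V → List V) : Type :=
  { x : V ⊕ (V × ℕ × V × List V) // GVP G P x }

/-- Labelling of the image of G_i^j: original labels on original vertices,
    `S` on the inserted delimiter vertices. -/
def GLab {i : ℕ} {V : Type} (G : TermGraph Lab3 (ar3 i) V) (P : V → List V)
    (x : GVert G P) : Lab4 :=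
  match x.val with
  | .inl w => lab3to4 (G.lab w)
  | .inr _ => .del

/-- The successor relation of the image of G_i^j (clauses as in the definition of
    the mapping G_i^j; for j = 2 the inserted S-vertices carry a 1-indexed back-link
    to the abstraction vertex whose extended scope they close). -/
def CSucc {i : ℕ} {V : Type} (j : ℕ) (G : TermGraph Lab3 (ar3 i) V) (P : V → List V)
    (k : ℕ) (x y : GVert G P) : Prop :=
  (∃ w wk, x.val = .inl w ∧ y.val = .inl wk ∧ G.Succ k w wk ∧
     (G.lab w = .var ∨ (G.lab w = .lam ∧ P wk = P w ++ [w]) ∨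
      (G.lab w = .app ∧ P wk = P w))) ∨
  (∃ w w₀, x.val = .inl w ∧ G.lab w = .lam ∧ G.Succ 0 w w₀ ∧ P w₀ ≠ P w ++ [w] ∧
     k = 0 ∧ y.val = .inr (w, 0, w₀, P w ++ [w])) ∨
  (∃ w wk, x.val = .inl w ∧ G.lab w = .app ∧ G.Succ k w wk ∧ P wk ≠ P w ∧
     y.val = .inr (w, k, wk, P w)) ∨
  (∃ w k' w' p v, x.val = .inr (w, k', w', p ++ [v]) ∧ k = 0 ∧ P w' ≠ p ∧
     y.val = .inr (w, k', w', p)) ∨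
  (∃ w k' w' v, x.val = .inr (w, k', w', P w' ++ [v]) ∧ k = 0 ∧ y.val = .inl w') ∨
  (j = 2 ∧ ∃ w k' w' p v, x.val = .inr (w, k', w', p ++ [v]) ∧ k = 1 ∧ y.val = .inl v)

/-- `IsGImage i j G P G'` : the Σλ^{i,j}-term-graph `G'` is the image of the
    λ-ap-ho-term-graph given by `G` and `P` under the mapping G_i^j. -/
def IsGImage (i j : ℕ) {V : Type} (G : TermGraph Lab3 (ar3 i) V) (P : V → List V)
    (G' : TermGraph Lab4 (ar4 i j) (GVert G P)) : Prop :=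
  (G'.root).val = .inl G.root ∧
  (∀ x, G'.lab x = GLab G P x) ∧
  (∀ k x y, G'.Succ k x y ↔ CSucc j G P k x y)

/-- One step along the 0-indexed edge of a scope-delimiter vertex. -/
def DelStep {i j : ℕ} {V : Type} (G : TermGraph Lab4 (ar4 i j) V) (a b : V) : Prop :=
  G.lab a = .del ∧ G.Succ 0 a b

/-- The non-delimiter vertices of a Σλ^{i,j}-term-graph. -/
def NVert {i j : ℕ} {V : Type} (G : TermGraph Lab4 (ar4 i j) V) : Type :=
  { v : V // G.lab v ≠ .del }

/-- `IsNImage i j G P G' P'` : the Σλ^i-term-graph `G'` with abstraction-prefix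
    function `P'` is the image of the λ-term-graph `G` (with correct prefix
    function `P`) under the mapping N_i^j: S-vertices are deleted, labels and the
    prefix function are restricted, the root is kept, and w₀ ↣'_k w₁ holds iff
    w₁ is reached from the k-th successor of w₀ by passing through finitely many
    S-vertices along their 0-indexed edges. -/
def IsNImage (i j : ℕ) {V : Type} (G : TermGraph Lab4 (ar4 i j) V) (P : V → List V)
    (G' : TermGraph Lab3 (ar3 i) (NVert G)) (P' : NVert G → List (NVert G)) : Prop :=
  (G'.root).val = G.root ∧
  (∀ x : NVert G, G'.lab x = lab4to3 (G.lab x.val)) ∧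
  (∀ k (a b : NVert G), G'.Succ k a b ↔
      ∃ u, G.Succ k a.val u ∧ Relation.ReflTransGen (DelStep G) u b.val) ∧
  (∀ v : NVert G, (P' v).map Subtype.val = P v.val)

/-- A λ-term-graph over Σλ^{1,2} (given by `G` with correct prefix function `P`) is
    fully back-linked if the last vertex of the abstraction prefix of any vertex `w`
    is reachable from `w`. -/
def FullyBackLinked {V : Type} (G : TermGraph Lab4 (ar4 1 2) V)
    (P : V → List V) : Prop :=
  ∀ w v p, P w = p ++ [v] → G.Reaches w v

/-- Eager-scope: whenever P(w) = p·v there is a path from `w` to `v` which ends with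
    a 0-indexed edge from a variable vertex to `v`, and all of whose intermediate
    vertices have abstraction prefixes extending P(w). -/
def EagerScope {V : Type} (G : TermGraph Lab4 (ar4 1 2) V)
    (P : V → List V) : Prop :=
  ∀ w v p, P w = p ++ [v] →
    ∃ (n : ℕ) (u : Fin (n + 1) → V),
      u 0 = w ∧
      (∀ m : Fin n, G.Edge (u m.castSucc) (u m.succ)) ∧
      G.Succ 0 (u (Fin.last n)) v ∧
      G.lab (u (Fin.last n)) = .var ∧
      ∀ m : Fin (n + 1), m ≠ 0 → P w <+: P (u m)

section AuxLemmas

private lemma chain_nodup {V : Type} {R : V → V → Prop} :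
    ∀ (n : ℕ) (a : V) (l : List V), l.length ≤ n → List.Chain' R (a :: l) →
    ∃ m : List V, List.Chain' R (a :: m) ∧ (a :: m).getLast? = (a :: l).getLast? ∧
      (a :: m).Nodup ∧ ∀ x ∈ m, x ∈ l := by
  intro n
  induction n with
  | zero =>
    intro a l hl hc
    have hnil : l = [] := List.eq_nil_of_length_eq_zero (Nat.le_zero.mp hl)
    subst hnil
    exact ⟨[], hc, rfl, List.nodup_singleton a, by simp⟩
  | succ n ih =>
    intro a l hl hc
    by_cases ha : a ∈ l
    · obtain ⟨s, t, rfl⟩ := List.append_of_mem ha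
      have hsuf : (a :: t) <:+ (a :: (s ++ a :: t)) :=
        (List.suffix_append s (a :: t)).trans (List.suffix_cons a _)
      have hct : List.Chain' R (a :: t) := hc.suffix hsuf
      have hlt : t.length ≤ n := by
        simp [List.length_append] at hl; omega
      obtain ⟨m, hm1, hm2, hm3, hm4⟩ := ih a t hlt hct
      refine ⟨m, hm1, ?_, hm3, fun x hx => by
        simp only [List.mem_append, List.mem_cons]
        exact Or.inr (Or.inr (hm4 x hx))⟩
      rw [hm2]
      have hrw : a :: (s ++ a :: t) = (a :: s) ++ (a :: t) := by simp
      rw [hrw, List.getLast?_append]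
      obtain ⟨y, hy⟩ : ∃ y, (a :: t).getLast? = some y := by
        cases h : (a :: t).getLast? with
        | none => exact absurd (List.getLast?_eq_none_iff.mp h) (by simp)
        | some y => exact ⟨y, rfl⟩
      rw [hy]; rfl
    · cases l with
      | nil => exact ⟨[], hc, rfl, List.nodup_singleton a, by simp⟩
      | cons c l' =>
        obtain ⟨hac, hcl⟩ := List.isChain_cons_cons.mp hc
        have hlt : l'.length ≤ n := by simp at hl; omega
        obtain ⟨m, hm1, hm2, hm3, hm4⟩ := ih c l' hlt hcl
        refine ⟨c :: m, List.isChain_cons_cons.mpr ⟨hac, hm1⟩, ?_, ?_, ?_⟩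
        · rw [List.getLast?_cons_cons, hm2, List.getLast?_cons_cons]
        · refine List.nodup_cons.mpr ⟨?_, hm3⟩
          intro hmem
          rcases List.mem_cons.mp hmem with h | h
          · exact ha (h ▸ List.mem_cons_self (a := c) (l := l'))
          · exact ha (List.mem_cons.mpr (Or.inr (hm4 a h)))
        · intro x hx
          rcases List.mem_cons.mp hx with h | h
          · exact h ▸ List.mem_cons_self (a := c) (l := l')
          · exact List.mem_cons.mpr (Or.inr (hm4 x h))

private lemma reach_chain {V : Type} {R : V → V → Prop} {a b : V}
    (h : Relation.ReflTransGen R a b) :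
    ∃ l : List V, List.Chain' R (a :: l) ∧ (a :: l).getLast? = some b := by
  induction h with
  | refl => exact ⟨[], List.isChain_singleton a, rfl⟩
  | @tail b c hab hbc ih =>
    obtain ⟨l, h1, h2⟩ := ih
    have hrw : a :: (l ++ [c]) = (a :: l) ++ [c] := by simp
    refine ⟨l ++ [c], ?_, ?_⟩
    · rw [hrw]
      refine h1.append (List.isChain_singleton c) ?_
      intro x hx y hy
      simp only [List.head?_cons, Option.mem_def, Option.some.injEq] at hy
      rw [h2] at hx
      simp only [Option.mem_def, Option.some.injEq] at hx
      subst hx; subst hy; exact hbc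
    · rw [hrw]; exact List.getLast?_concat

private lemma exists_access_path {L V : Type} {ar : L → ℕ}
    (G : TermGraph L ar V) (w : V) : Nonempty (AccessPath G w) := by
  obtain ⟨l, h1, h2⟩ := reach_chain (G.reach w)
  obtain ⟨m, hm1, hm2, hm3, _⟩ := chain_nodup l.length G.root l le_rfl h1
  rw [h2] at hm2
  have hlen : (G.root :: m).length = m.length + 1 := by simp
  set L' : List V := G.root :: m with hL
  have vs : Fin (m.length + 1) → V := fun i => L'.get (Fin.cast hlen.symm i)
  have hedge : ∀ j : Fin m.length, ∃ k,
      G.Succ k (L'.get (Fin.cast hlen.symm j.castSucc)) (L'.get (Fin.cast hlen.symm j.succ)) := by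
    intro j
    have hch := List.isChain_iff_getElem.mp hm1 j.val (by simp [hL])
    have : L'.get (Fin.cast hlen.symm j.succ) ∈ G.args (L'.get (Fin.cast hlen.symm j.castSucc)) := by
      exact hch
    exact List.mem_iff_getElem?.mp this
  refine ⟨⟨m.length, fun i => L'.get (Fin.cast hlen.symm i),
      fun j => (hedge j).choose, rfl, ?_, fun j => (hedge j).choose_spec, ?_⟩⟩
  · -- finish
    have : L'.getLast? = L'[m.length]? := by
      rw [List.getLast?_eq_getElem?]; simp [hL]
    rw [hm2] at this
    have h3 : L'[m.length]? = some (L'.get (Fin.cast hlen.symm (Fin.last m.length))) := by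
      simp [List.getElem?_eq_getElem, hL]
    rw [h3] at this
    exact (Option.some.injEq _ _ ▸ this).symm
  · intro x y hxy
    have hinj := List.nodup_iff_injective_get.mp hm3
    have := hinj hxy
    exact Fin.cast_injective _ (by exact this)

end AuxLemmas

/-- Lemma 2.1(i): in a λ-ho-term-graph, if w ∈ Sc(v) then v is visited on every
    access path of w and all vertices after v on such a path lie in Sc(v)\{v};
    consequently the set of binders of w is finite. -/
theorem lhotg_access_path_and_finite_binders :
    ∀ i ∈ ({0, 1} : Set ℕ), ∀ (V : Type) (G : LamHoTG i V) (w : V),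
      (∀ v, G.lab v = Lab3.lam → w ∈ G.Sc v →
        ∀ p : AccessPath G.toTermGraph w,
          ∃ m : Fin (p.n + 1), p.vs m = v ∧
            ∀ m' : Fin (p.n + 1), m < m' → p.vs m' ∈ G.Sc v \ {v}) ∧
      {v : V | G.lab v = Lab3.lam ∧ w ∈ G.Sc v}.Finite := by
  intro i _ V G w
  obtain ⟨hroot, hself, hnest, hclosed, hscope0, hscope1⟩ := G.conds
  have key : ∀ v, G.lab v = Lab3.lam → w ∈ G.Sc v →
      ∀ p : AccessPath G.toTermGraph w,
        ∃ m : Fin (p.n + 1), p.vs m = v ∧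
          ∀ m' : Fin (p.n + 1), m < m' → p.vs m' ∈ G.Sc v \ {v} := by
    intro v hv hw p
    have aux : ∀ (mn : ℕ) (hm : mn < p.n + 1), p.vs ⟨mn, hm⟩ ∈ G.Sc v →
        (∀ m' : Fin (p.n + 1), mn < (m' : ℕ) → p.vs m' ∈ G.Sc v \ {v}) →
        ∃ m : Fin (p.n + 1), p.vs m = v ∧
          ∀ m' : Fin (p.n + 1), m < m' → p.vs m' ∈ G.Sc v \ {v} := by
      intro mn
      induction mn with
      | zero =>
        intro hm hsc hafter
        by_cases heq : p.vs ⟨0, hm⟩ = v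
        · exact ⟨⟨0, hm⟩, heq, fun m' h => hafter m' (Fin.lt_def.mp h)⟩
        · exfalso
          have h0 : (⟨0, hm⟩ : Fin (p.n + 1)) = 0 := rfl
          refine hroot v hv ⟨?_, ?_⟩
          · rw [← p.start, ← h0]; exact hsc
          · intro hmem
            apply heq
            rw [h0, p.start]
            exact Set.mem_singleton_iff.mp hmem
      | succ k ih =>
        intro hm hsc hafter
        by_cases heq : p.vs ⟨k + 1, hm⟩ = v
        · exact ⟨⟨k + 1, hm⟩, heq, fun m' h => hafter m' (Fin.lt_def.mp h)⟩
        · have hk : k < p.n := by omega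
          have hstep := p.step ⟨k, hk⟩
          have hsucc_eq : (⟨k, hk⟩ : Fin p.n).succ = ⟨k + 1, hm⟩ := rfl
          have hcast_eq : (⟨k, hk⟩ : Fin p.n).castSucc = ⟨k, by omega⟩ := rfl
          have hmem : p.vs (⟨k, hk⟩ : Fin p.n).succ ∈ G.Sc v \ {v} := by
            rw [hsucc_eq]; exact ⟨hsc, heq⟩
          have hprev : p.vs (⟨k, hk⟩ : Fin p.n).castSucc ∈ G.Sc v :=
            hclosed v _ _ _ hv hstep hmem
          rw [hcast_eq] at hprev
          refine ih (by omega) hprev ?_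
          intro m' hm'
          rcases Nat.lt_or_ge (k + 1) (m' : ℕ) with h | h
          · exact hafter m' h
          · have hval : (m' : ℕ) = k + 1 := by omega
            have : m' = ⟨k + 1, hm⟩ := Fin.ext hval
            rw [this]; exact ⟨hsc, heq⟩
    have hlastmem : p.vs ⟨p.n, by omega⟩ ∈ G.Sc v := by
      have : (⟨p.n, by omega⟩ : Fin (p.n + 1)) = Fin.last p.n := rfl
      rw [this, p.finish]; exact hw
    exact aux p.n (by omega) hlastmem (fun m' h => absurd m'.isLt (by omega))
  refine ⟨key, ?_⟩
  obtain ⟨p⟩ := exists_access_path G.toTermGraph w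
  have hex : ∀ v : {v : V | G.lab v = Lab3.lam ∧ w ∈ G.Sc v},
      ∃ m : Fin (p.n + 1), p.vs m = v.val :=
    fun v => (key v.val v.prop.1 v.prop.2 p).imp (fun m hm => hm.1)
  choose f hf using hex
  apply Set.finite_coe_iff.mp
  refine Finite.of_injective f ?_
  intro x y hxy
  apply Subtype.ext
  rw [← hf x, ← hf y, hxy]
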